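/- Let Γ be a positive monoid acting by automorphisms on the Γ-algebra B, and A a Γ-graded algebra with A_ε ≅ K and Rad(B) = 0. Then the graded radical of the skew product satisfies rad(A ⋉_Γ B) = rad(A) ⋉_Γ B = rad(A) ⊗ B. -/

import Mathlib

open scoped TensorProduct

/-- Make an ideal from a `K`-submodule closed under left multiplication. -/
def idealOfSubmodule {K C : Type*} [CommSemiring K] [Ring C] [Algebra K C]
    (N : Submodule K C) (h : ∀ c x, x ∈ N → c * x ∈ N) : Ideal C where
  carrier := N
  add_mem' := fun ha hb => N.add_mem ha hb
  zero_mem' := N.zero_mem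
  smul_mem' := fun c x hx => by simpa [smul_eq_mul] using h c x hx

theorem mem_idealOfSubmodule {K C : Type*} [CommSemiring K] [Ring C] [Algebra K C]
    {N : Submodule K C} {h : ∀ c x, x ∈ N → c * x ∈ N} {x : C} :
    x ∈ idealOfSubmodule N h ↔ x ∈ N := Iff.rfl

set_option maxHeartbeats 1600000 in
/-- Over a positive monoid `Γ` acting by automorphisms on `B`, if `A_ε ≅ K` and
`Rad(B) = 0`, then the graded radical of the skew product `C = A ⋉_Γ B` is
`rad(A) ⋉_Γ B = rad(A) ⊗ B`.  Graded (left) ideals of `C` are taken with respect to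
the grading `C_γ = A_γ ⊗ B`, an ideal being homogeneous when it is the sum of its
intersections with the homogeneous components. -/
theorem stmt11 {K : Type*} [Field K] {Γ : Type*} [AddMonoid Γ] [DecidableEq Γ]
    (hpos : ∀ γ₁ γ₂ : Γ, γ₁ + γ₂ = 0 → γ₁ = 0 ∧ γ₂ = 0)
    {A : Type*} [Ring A] [Algebra K A] (𝒜 : Γ → Submodule K A) [GradedAlgebra 𝒜]
    -- `A_ε ≅ K`
    (hA0 : ∀ a ∈ 𝒜 (0 : Γ), ∃ c : K, a = c • (1 : A))
    {B : Type*} [Ring B] [Algebra K B]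
    -- `Rad(B) = 0`
    (hB : (⊥ : Ideal B).jacobson = ⊥)
    -- `Γ` acts on `B` by algebra automorphisms
    (ρ : Γ → (B ≃ₐ[K] B))
    (hρ0 : ∀ b : B, ρ 0 b = b)
    (hρadd : ∀ γ₁ γ₂ : Γ, ∀ b : B, ρ (γ₁ + γ₂) b = ρ γ₂ (ρ γ₁ b))
    -- the skew product algebra `C = A ⋉_Γ B`
    {C : Type*} [Ring C] [Algebra K C]
    (e : (A ⊗[K] B) ≃ₗ[K] C)
    (he1 : e ((1 : A) ⊗ₜ[K] (1 : B)) = 1)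
    (hemul : ∀ (γ₂ : Γ) (a₁ a₂ : A), a₂ ∈ 𝒜 γ₂ → ∀ b₁ b₂ : B,
      e (a₁ ⊗ₜ[K] b₁) * e (a₂ ⊗ₜ[K] b₂) = e ((a₁ * a₂) ⊗ₜ[K] (ρ γ₂ b₁ * b₂)))
    -- the grading of `C` and the notion of homogeneous ideal of `C`
    (𝒞 : Γ → Submodule K C)
    (h𝒞 : ∀ γ : Γ, 𝒞 γ = Submodule.span K {c : C | ∃ a ∈ 𝒜 γ, ∃ b : B, c = e (a ⊗ₜ[K] b)})
    (HomC : Ideal C → Prop)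
    (hHomC : ∀ I : Ideal C,
      HomC I ↔ I.restrictScalars K = ⨆ γ : Γ, (I.restrictScalars K ⊓ 𝒞 γ)) :
    (sInf {I : Ideal C | HomC I ∧ I ≠ ⊤ ∧
        ∀ J : Ideal C, HomC J → I < J → J = ⊤}).restrictScalars K =
      Submodule.span K {c : C |
        ∃ a ∈ sInf {m : Ideal A | m.IsHomogeneous 𝒜 ∧ m ≠ ⊤ ∧
          ∀ I : Ideal A, I.IsHomogeneous 𝒜 → m < I → I = ⊤},
        ∃ b : B, c = e (a ⊗ₜ[K] b)} := by
  classical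
  by_cases htriv : (1 : A) = 0
  · -- degenerate case : `C` is the zero ring, all submodules coincide
    have h0 : (1 : C) = 0 := by
      rw [← he1]
      have h1 : (1 : A) ⊗ₜ[K] (1 : B) = (0 : A ⊗[K] B) := by
        rw [htriv, TensorProduct.zero_tmul]
      rw [h1, map_zero]
    have hsub : Subsingleton C := subsingleton_of_zero_eq_one h0.symm
    ext x
    have hx : x = 0 := Subsingleton.elim x 0
    subst hx
    simp [Submodule.zero_mem]
  -- main case
  have : Nontrivial A := nontrivial_of_ne 1 0 htriv
  -- projections of the grading of A
  set pA : Γ → A →ₗ[K] A := fun γ =>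
    (𝒜 γ).subtype ∘ₗ (DirectSum.component K Γ (fun γ => ↥(𝒜 γ)) γ) ∘ₗ
      (DirectSum.decomposeLinearEquiv 𝒜).toLinearMap with hpA_def
  have hpA_apply : ∀ (γ : Γ) (a : A), pA γ a = (DirectSum.decompose 𝒜 a γ : A) :=
    fun γ a => rfl
  have hpA_mem : ∀ (γ : Γ) (a : A), pA γ a ∈ 𝒜 γ := fun γ a => by
    rw [hpA_apply]; exact SetLike.coe_mem _
  have hpA_same : ∀ {γ : Γ} {a : A}, a ∈ 𝒜 γ → pA γ a = a := fun {γ a} h => by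
    rw [hpA_apply]; exact DirectSum.decompose_of_mem_same 𝒜 h
  have hpA_ne : ∀ {γ δ : Γ} {a : A}, a ∈ 𝒜 γ → γ ≠ δ → pA δ a = 0 := fun {γ δ a} h hne => by
    rw [hpA_apply]; exact DirectSum.decompose_of_mem_ne 𝒜 h hne
  have h1mem : (1 : A) ∈ 𝒜 (0 : Γ) := SetLike.one_mem_graded 𝒜
  have hpA1 : pA 0 (1 : A) = 1 := hpA_same h1mem
  -- the augmentation ideal of A
  set Aplus : Submodule K A := ⨆ γ : {γ : Γ // γ ≠ 0}, 𝒜 ↑γ with hAplus_def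
  have hle_plus : ∀ {γ : Γ}, γ ≠ 0 → 𝒜 γ ≤ Aplus := fun {γ} h =>
    le_iSup (fun γ : {γ : Γ // γ ≠ 0} => 𝒜 ↑γ) ⟨γ, h⟩
  have hsubA : ∀ a : A, a - pA 0 a ∈ Aplus := by
    intro a
    have hsum : ∑ γ ∈ (DirectSum.decompose 𝒜 a).support, pA γ a = a := by
      conv_rhs => rw [← DirectSum.sum_support_decompose 𝒜 a]
      exact Finset.sum_congr rfl fun γ _ => hpA_apply γ a
    by_cases h0 : (0 : Γ) ∈ (DirectSum.decompose 𝒜 a).support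
    · have h2 := Finset.add_sum_erase _ (fun γ => pA γ a) h0
      have h3 : a = pA 0 a + ∑ γ ∈ (DirectSum.decompose 𝒜 a).support.erase 0, pA γ a :=
        (h2.trans hsum).symm
      have ha : a - pA 0 a = ∑ γ ∈ (DirectSum.decompose 𝒜 a).support.erase 0, pA γ a :=
        sub_eq_of_eq_add' h3
      rw [ha]
      exact Submodule.sum_mem _ fun γ hγ => hle_plus (Finset.ne_of_mem_erase hγ) (hpA_mem γ a)
    · have hz : pA 0 a = 0 := by
        rw [hpA_apply]
        rw [DFinsupp.notMem_support_iff.mp h0]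
        rfl
      rw [hz, sub_zero, ← hsum]
      exact Submodule.sum_mem _ fun γ hγ =>
        hle_plus (fun hγ0 => h0 (hγ0 ▸ hγ)) (hpA_mem γ a)
  have hAplus_proj : ∀ (δ : Γ) (x : A), x ∈ Aplus → pA δ x ∈ Aplus := by
    intro δ x hx
    refine Submodule.iSup_induction _ (motive := fun x => pA δ x ∈ Aplus) hx ?_ ?_ ?_
    · rintro ⟨γ, hγ⟩ y hy
      by_cases h : γ = δ
      · subst h; rw [hpA_same hy]; exact hle_plus hγ hy
      · rw [hpA_ne hy h]; exact Submodule.zero_mem _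
    · beta_reduce; rw [map_zero]; exact Submodule.zero_mem _
    · intro u v hu hv; beta_reduce at hu hv ⊢; rw [map_add]; exact Submodule.add_mem _ hu hv
  have hp0_plus : ∀ x ∈ Aplus, pA 0 x = 0 := by
    intro x hx
    refine Submodule.iSup_induction _ (motive := fun x => pA 0 x = 0) hx ?_ (map_zero (pA 0)) ?_
    · rintro ⟨γ, hγ⟩ y hy; exact hpA_ne hy hγ
    · intro u v hu hv; beta_reduce at hu hv ⊢; rw [map_add, hu, hv, add_zero]
  -- the coefficient functional `f : A → K` at degree 0
  have hker : LinearMap.ker (Algebra.linearMap K A) = ⊥ := by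
    rw [LinearMap.ker_eq_bot']
    intro c hc
    by_contra hc0
    apply htriv
    have hc' : algebraMap K A c = 0 := hc
    calc (1 : A) = algebraMap K A (c⁻¹ * c) := by rw [inv_mul_cancel₀ hc0, map_one]
      _ = algebraMap K A c⁻¹ * algebraMap K A c := map_mul _ _ _
      _ = 0 := by rw [hc', mul_zero]
  obtain ⟨hmap, hh⟩ := (Algebra.linearMap K A).exists_leftInverse_of_injective hker
  set f : A →ₗ[K] K := hmap ∘ₗ pA 0 with hf_def
  have hfA0 : ∀ a ∈ 𝒜 (0 : Γ), a = f a • 1 := by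
    intro a ha
    obtain ⟨c, hc⟩ := hA0 a ha
    have h1 : f a = c := by
      have h2 : pA 0 a = a := hpA_same ha
      have hga : a = Algebra.linearMap K A c := by
        rw [hc, Algebra.linearMap_apply, Algebra.algebraMap_eq_smul_one]
      calc f a = hmap (pA 0 a) := rfl
        _ = hmap (Algebra.linearMap K A c) := by rw [h2, ← hga]
        _ = c := by rw [← LinearMap.comp_apply, hh]; rfl
    rw [h1, ← hc]
  have hf1 : f (1 : A) = 1 := by
    have h2 : pA 0 (1 : A) = Algebra.linearMap K A 1 := by
      rw [hpA1, Algebra.linearMap_apply, map_one]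
    calc f 1 = hmap (pA 0 1) := rfl
      _ = 1 := by rw [h2, ← LinearMap.comp_apply, hh]; rfl
  have hf_ne : ∀ {γ : Γ}, γ ≠ 0 → ∀ a ∈ 𝒜 γ, f a = 0 := by
    intro γ hγ a ha
    have h2 : pA 0 a = 0 := hpA_ne ha hγ
    show hmap (pA 0 a) = 0
    rw [h2, map_zero]
  have hf_plus : ∀ x ∈ Aplus, f x = 0 := fun x hx => by
    show hmap (pA 0 x) = 0
    rw [hp0_plus x hx, map_zero]
  have h1_nplus : (1 : A) ∉ Aplus := fun h1 =>
    one_ne_zero (hf1.symm.trans (hf_plus 1 h1))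
  -- Aplus is a (left) ideal
  have htopA : ∀ x : A, x ∈ ⨆ γ : Γ, 𝒜 γ := by
    intro x
    rw [DirectSum.IsInternal.submodule_iSup_eq_top (DirectSum.Decomposition.isInternal 𝒜)]
    trivial
  have hAplus_mul : ∀ x y : A, y ∈ Aplus → x * y ∈ Aplus := by
    intro x y hy
    refine Submodule.iSup_induction _ (motive := fun y => x * y ∈ Aplus) hy ?_
      (by beta_reduce; rw [mul_zero]; exact Submodule.zero_mem _)
      (fun a b ha hb => by beta_reduce; rw [mul_add]; exact Submodule.add_mem _ ha hb)
    rintro ⟨γ, hγ⟩ z hz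
    refine Submodule.iSup_induction _ (motive := fun x => x * z ∈ Aplus) (htopA x) ?_
      (by beta_reduce; rw [zero_mul]; exact Submodule.zero_mem _)
      (fun a b ha hb => by beta_reduce; rw [add_mul]; exact Submodule.add_mem _ ha hb)
    intro δ w hw
    exact hle_plus (fun h0 => hγ (hpos δ γ h0).2) (SetLike.mul_mem_graded hw hz)
  set AplusI : Ideal A := idealOfSubmodule Aplus hAplus_mul with hAplusI_def
  have hAplusI_hom : AplusI.IsHomogeneous 𝒜 := by
    intro γ r hr
    have h2 : (DirectSum.decompose 𝒜 r γ : A) = pA γ r := (hpA_apply γ r).symm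
    rw [h2]
    exact hAplus_proj γ r hr
  have hAplusI_ne : AplusI ≠ ⊤ := fun h =>
    h1_nplus ((Ideal.eq_top_iff_one AplusI).mp h)
  have hproperA : ∀ I : Ideal A, I.IsHomogeneous 𝒜 → I ≠ ⊤ → ∀ x ∈ I, x ∈ Aplus := by
    intro I hhom hne x hx
    have h0x : pA 0 x ∈ I := by
      have h2 := hhom 0 hx
      rwa [← hpA_apply] at h2
    obtain ⟨c, hc⟩ := hA0 _ (hpA_mem 0 x)
    by_cases hc0 : c = 0
    · have h2 : pA 0 x = 0 := by rw [hc, hc0, zero_smul]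
      have h3 := hsubA x
      rwa [h2, sub_zero] at h3
    · exfalso; apply hne
      rw [Ideal.eq_top_iff_one]
      have h1 : (1 : A) = c⁻¹ • pA 0 x := by
        rw [hc, smul_smul, inv_mul_cancel₀ hc0, one_smul]
      rw [h1]
      exact Submodule.smul_mem (I.restrictScalars K) _ h0x
  -- rad A = Aplus
  have hradA : ∀ a : A,
      (a ∈ sInf {m : Ideal A | m.IsHomogeneous 𝒜 ∧ m ≠ ⊤ ∧
        ∀ I : Ideal A, I.IsHomogeneous 𝒜 → m < I → I = ⊤}) ↔ a ∈ Aplus := by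
    intro a
    constructor
    · intro ha
      have hmem : AplusI ∈ {m : Ideal A | m.IsHomogeneous 𝒜 ∧ m ≠ ⊤ ∧
          ∀ I : Ideal A, I.IsHomogeneous 𝒜 → m < I → I = ⊤} := by
        refine ⟨hAplusI_hom, hAplusI_ne, ?_⟩
        intro I hI hlt
        by_contra hne
        exact (not_le_of_gt hlt) (fun x hx => hproperA I hI hne x hx)
      exact Submodule.mem_sInf.mp ha AplusI hmem
    · intro ha
      rw [Submodule.mem_sInf]
      rintro I ⟨hIh, hIne, hImax⟩
      have hle : I ≤ AplusI := fun x hx => hproperA I hIh hIne x hx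
      have heq : I = AplusI := by
        by_contra hne
        exact hAplusI_ne (hImax AplusI hAplusI_hom (lt_of_le_of_ne hle hne))
      rw [heq]; exact ha
  -- maps on C
  set q0 : C →ₗ[K] C :=
    e.toLinearMap ∘ₗ (LinearMap.rTensor B (pA 0)) ∘ₗ e.symm.toLinearMap with hq0_def
  set Φ : C →ₗ[K] B :=
    (TensorProduct.lid K B).toLinearMap ∘ₗ (LinearMap.rTensor B f) ∘ₗ e.symm.toLinearMap
    with hPhi_def
  set ψ : B →ₗ[K] C := e.toLinearMap ∘ₗ (TensorProduct.mk K A B 1) with hpsi_def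
  have hψ_t : ∀ b : B, ψ b = e ((1 : A) ⊗ₜ[K] b) := fun b => rfl
  have hΦ_t : ∀ (a : A) (b : B), Φ (e (a ⊗ₜ[K] b)) = f a • b := by
    intro a b
    rw [hPhi_def]
    simp [LinearMap.rTensor_tmul, TensorProduct.lid_tmul]
  have hΦψ : ∀ b : B, Φ (ψ b) = b := fun b => by beta_reduce; rw [hψ_t, hΦ_t, hf1, one_smul]
  have hΦ1 : Φ (1 : C) = 1 := by rw [← he1, hΦ_t, hf1, one_smul]
  have hCgen : ∀ {γ : Γ} {a : A}, a ∈ 𝒜 γ → ∀ b : B, e (a ⊗ₜ[K] b) ∈ 𝒞 γ := by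
    intro γ a ha b
    rw [h𝒞]
    exact Submodule.subset_span ⟨a, ha, b, rfl⟩
  have hψ_mem : ∀ b : B, ψ b ∈ 𝒞 (0 : Γ) := fun b => by
    rw [hψ_t]; exact hCgen h1mem b
  have hψ_smul : ∀ a ∈ 𝒜 (0 : Γ), ∀ b : B, e (a ⊗ₜ[K] b) = f a • ψ b := by
    intro a ha b
    rw [hψ_t, ← map_smul, TensorProduct.smul_tmul', ← hfA0 a ha]
  have hψmul : ∀ b₁ b₂ : B, ψ b₁ * ψ b₂ = ψ (b₁ * b₂) := by
    intro b₁ b₂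
    rw [hψ_t, hψ_t, hψ_t, hemul 0 1 1 h1mem b₁ b₂, mul_one, hρ0]
  have hΦ_Cγ : ∀ {γ : Γ}, γ ≠ 0 → ∀ x ∈ 𝒞 γ, Φ x = 0 := by
    intro γ hγ x hx
    rw [h𝒞] at hx
    induction hx using Submodule.span_induction with
    | mem c hc =>
      obtain ⟨a, ha, b, rfl⟩ := hc
      rw [hΦ_t, hf_ne hγ a ha, zero_smul]
    | zero => exact map_zero Φ
    | add u v hu hv ihu ihv => rw [map_add, ihu, ihv, add_zero]
    | smul k u hu ih => rw [map_smul, ih, smul_zero]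
  -- Cplus
  set Cplus : Submodule K C := ⨆ γ : {γ : Γ // γ ≠ 0}, 𝒞 ↑γ with hCplus_def
  have hCle_plus : ∀ {γ : Γ}, γ ≠ 0 → 𝒞 γ ≤ Cplus := fun {γ} h =>
    le_iSup (fun γ : {γ : Γ // γ ≠ 0} => 𝒞 ↑γ) ⟨γ, h⟩
  have hΦ_plus : ∀ x ∈ Cplus, Φ x = 0 := by
    intro x hx
    refine Submodule.iSup_induction _ (motive := fun x => Φ x = 0) hx ?_ (map_zero Φ)
      (fun a b ha hb => by beta_reduce at ha hb ⊢; rw [map_add, ha, hb, add_zero])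
    rintro ⟨γ, hγ⟩ y hy; exact hΦ_Cγ hγ y hy
  have hψΦ_C0 : ∀ x ∈ 𝒞 (0 : Γ), ψ (Φ x) = x := by
    intro x hx
    rw [h𝒞] at hx
    induction hx using Submodule.span_induction with
    | mem c hc =>
      obtain ⟨a, ha, b, rfl⟩ := hc
      rw [hΦ_t, map_smul, hψ_t, ← map_smul, TensorProduct.smul_tmul', ← hfA0 a ha]
    | zero => rw [map_zero, map_zero]
    | add u v hu hv ihu ihv => rw [map_add, map_add, ihu, ihv]
    | smul k u hu ih => rw [map_smul, map_smul, ih]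
  have hAplusC : ∀ a ∈ Aplus, ∀ b : B, e (a ⊗ₜ[K] b) ∈ Cplus := by
    intro a ha b
    refine Submodule.iSup_induction _ (motive := fun a => e (a ⊗ₜ[K] b) ∈ Cplus) ha ?_ ?_ ?_
    · rintro ⟨γ, hγ⟩ y hy; exact hCle_plus hγ (hCgen hy b)
    · beta_reduce; rw [TensorProduct.zero_tmul, map_zero]; exact Submodule.zero_mem _
    · intro u v hu hv
      beta_reduce at hu hv ⊢
      rw [TensorProduct.add_tmul, map_add]; exact Submodule.add_mem _ hu hv
  have hsubC : ∀ x : C, x - q0 x ∈ Cplus := by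
    intro x
    have key : ∀ t : A ⊗[K] B, e t - e (LinearMap.rTensor B (pA 0) t) ∈ Cplus := by
      intro t
      induction t using TensorProduct.induction_on with
      | zero => rw [map_zero, map_zero, map_zero, sub_zero]; exact Submodule.zero_mem _
      | tmul a b =>
        rw [LinearMap.rTensor_tmul, ← map_sub, ← TensorProduct.sub_tmul]
        exact hAplusC _ (hsubA a) b
      | add s t hs ht =>
        have h2 : e (s + t) - e (LinearMap.rTensor B (pA 0) (s + t)) =
            (e s - e (LinearMap.rTensor B (pA 0) s)) +
            (e t - e (LinearMap.rTensor B (pA 0) t)) := by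
          rw [map_add, map_add, map_add]; abel
        rw [h2]; exact Submodule.add_mem _ hs ht
    have h2 := key (e.symm x)
    rw [e.apply_symm_apply] at h2
    exact h2
  have hq0_mem : ∀ x : C, q0 x ∈ 𝒞 (0 : Γ) := by
    intro x
    have key : ∀ t : A ⊗[K] B, e (LinearMap.rTensor B (pA 0) t) ∈ 𝒞 (0 : Γ) := by
      intro t
      induction t using TensorProduct.induction_on with
      | zero => rw [map_zero, map_zero]; exact Submodule.zero_mem _
      | tmul a b => rw [LinearMap.rTensor_tmul]; exact hCgen (hpA_mem 0 a) b
      | add s t hs ht => rw [map_add, map_add]; exact Submodule.add_mem _ hs ht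
    exact key (e.symm x)
  have hq0_eq : ∀ x : C, q0 x = ψ (Φ x) := by
    intro x
    have h1 : Φ (q0 x) = Φ x := by
      have h2 := hΦ_plus _ (hsubC x)
      rw [map_sub] at h2
      have h3 := sub_eq_zero.mp h2
      exact h3.symm
    rw [← h1]
    exact (hψΦ_C0 _ (hq0_mem x)).symm
  have hq0_C0 : ∀ x ∈ 𝒞 (0 : Γ), q0 x = x := fun x hx => by
    rw [hq0_eq, hψΦ_C0 x hx]
  have hq0_Cγ : ∀ {γ : Γ}, γ ≠ 0 → ∀ x ∈ 𝒞 γ, q0 x = 0 := fun {γ} hγ x hx => by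
    rw [hq0_eq, hΦ_Cγ hγ x hx, map_zero]
  have hq0_ideal : ∀ I : Ideal C, HomC I → ∀ x : C, x ∈ I → q0 x ∈ I := by
    intro I hI x hx
    have hx' : x ∈ ⨆ γ : Γ, (I.restrictScalars K ⊓ 𝒞 γ) := by
      rw [← (hHomC I).mp hI]; exact hx
    refine Submodule.iSup_induction _ (motive := fun x => q0 x ∈ I) hx' ?_
      (by beta_reduce; rw [map_zero]; exact I.zero_mem)
      (fun a b ha hb => by beta_reduce; rw [map_add]; exact I.add_mem ha hb)
    intro γ y hy
    by_cases hγ : γ = 0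
    · subst hγ; rw [hq0_C0 y hy.2]; exact hy.1
    · rw [hq0_Cγ hγ y hy.2]; exact I.zero_mem
  have h1C : (1 : C) ∈ 𝒞 (0 : Γ) := by rw [← he1]; exact hCgen h1mem 1
  have hCmul : ∀ (γ δ : Γ) (x : C), x ∈ 𝒞 γ → ∀ y ∈ 𝒞 δ, x * y ∈ 𝒞 (γ + δ) := by
    intro γ δ x hx y hy
    rw [h𝒞 δ] at hy
    induction hy using Submodule.span_induction with
    | mem c hc =>
      obtain ⟨a₂, ha₂, b₂, rfl⟩ := hc
      rw [h𝒞 γ] at hx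
      induction hx using Submodule.span_induction with
      | mem d hd =>
        obtain ⟨a₁, ha₁, b₁, rfl⟩ := hd
        rw [hemul δ a₁ a₂ ha₂ b₁ b₂]
        exact hCgen (SetLike.mul_mem_graded ha₁ ha₂) _
      | zero => rw [zero_mul]; exact Submodule.zero_mem _
      | add u v hu hv ihu ihv => rw [add_mul]; exact Submodule.add_mem _ ihu ihv
      | smul k u hu ih => rw [smul_mul_assoc]; exact Submodule.smul_mem _ _ ih
    | zero => rw [mul_zero]; exact Submodule.zero_mem _
    | add u v hu hv ihu ihv => rw [mul_add]; exact Submodule.add_mem _ ihu ihv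
    | smul k u hu ih => rw [mul_smul_comm]; exact Submodule.smul_mem _ _ ih
  have hCtop : ∀ x : C, x ∈ ⨆ γ : Γ, 𝒞 γ := by
    intro x
    have h1 : q0 x ∈ ⨆ γ : Γ, 𝒞 γ := Submodule.mem_iSup_of_mem 0 (hq0_mem x)
    have h2 : x - q0 x ∈ ⨆ γ : Γ, 𝒞 γ := by
      refine Submodule.iSup_induction _ (motive := fun y => y ∈ ⨆ γ : Γ, 𝒞 γ) (hsubC x) ?_
        (Submodule.zero_mem _) (fun a b ha hb => Submodule.add_mem _ ha hb)
      rintro ⟨γ, hγ⟩ y hy; exact Submodule.mem_iSup_of_mem γ hy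
    have h3 := Submodule.add_mem _ h2 h1
    rwa [sub_add_cancel] at h3
  have hCplus_mul : ∀ x y : C, y ∈ Cplus → x * y ∈ Cplus := by
    intro x y hy
    refine Submodule.iSup_induction _ (motive := fun y => x * y ∈ Cplus) hy ?_
      (by beta_reduce; rw [mul_zero]; exact Submodule.zero_mem _)
      (fun a b ha hb => by beta_reduce; rw [mul_add]; exact Submodule.add_mem _ ha hb)
    rintro ⟨γ, hγ⟩ z hz
    refine Submodule.iSup_induction _ (motive := fun x => x * z ∈ Cplus) (hCtop x) ?_
      (by beta_reduce; rw [zero_mul]; exact Submodule.zero_mem _)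
      (fun a b ha hb => by beta_reduce; rw [add_mul]; exact Submodule.add_mem _ ha hb)
    intro δ w hw
    exact hCle_plus (fun h0 => hγ (hpos δ γ h0).2) (hCmul δ γ w hw z hz)
  set CplusI : Ideal C := idealOfSubmodule Cplus hCplus_mul with hCplusI_def
  -- every maximal homogeneous ideal of C contains Cplus
  have hmax_plus : ∀ I : Ideal C, HomC I → I ≠ ⊤ →
      (∀ J : Ideal C, HomC J → I < J → J = ⊤) → Cplus ≤ I.restrictScalars K := by
    intro I hIh hIne hImax
    by_contra hnle
    have hJh : HomC (I ⊔ CplusI) := by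
      rw [hHomC]
      apply le_antisymm
      · intro x hx
        have hx' : x ∈ I ⊔ CplusI := hx
        obtain ⟨y, hy, z, hz, rfl⟩ := Submodule.mem_sup.mp hx'
        apply Submodule.add_mem
        · have hy' : y ∈ ⨆ γ : Γ, (I.restrictScalars K ⊓ 𝒞 γ) := by
            rw [← (hHomC I).mp hIh]; exact hy
          refine Submodule.iSup_induction _
            (motive := fun y => y ∈ ⨆ γ : Γ, ((I ⊔ CplusI).restrictScalars K ⊓ 𝒞 γ)) hy' ?_
            (Submodule.zero_mem _) (fun a b ha hb => Submodule.add_mem _ ha hb)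
          intro γ w hw
          exact Submodule.mem_iSup_of_mem γ ⟨Submodule.mem_sup_left hw.1, hw.2⟩
        · refine Submodule.iSup_induction _
            (motive := fun z => z ∈ ⨆ γ : Γ, ((I ⊔ CplusI).restrictScalars K ⊓ 𝒞 γ)) hz ?_
            (Submodule.zero_mem _) (fun a b ha hb => Submodule.add_mem _ ha hb)
          rintro ⟨γ, hγ⟩ w hw
          refine Submodule.mem_iSup_of_mem γ ⟨?_, hw⟩
          exact Submodule.mem_sup_right (hCle_plus hγ hw)
      · exact iSup_le fun γ => inf_le_left
    have hne2 : I ≠ I ⊔ CplusI := by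
      intro h
      apply hnle
      intro x hx
      have h2 : x ∈ I ⊔ CplusI := Submodule.mem_sup_right hx
      rw [← h] at h2
      exact h2
    have hJtop : I ⊔ CplusI = ⊤ := hImax _ hJh (lt_of_le_of_ne le_sup_left hne2)
    have h1 : (1 : C) ∈ I ⊔ CplusI := by rw [hJtop]; trivial
    obtain ⟨y, hy, z, hz, hyz⟩ := Submodule.mem_sup.mp h1
    have hq1 : q0 (1 : C) = 1 := hq0_C0 1 h1C
    have hz0 : q0 z = 0 := by rw [hq0_eq, hΦ_plus z hz, map_zero]
    have h2 : (1 : C) = q0 y := by rw [← hq1, ← hyz, map_add, hz0, add_zero]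
    have h3 : (1 : C) ∈ I := by rw [h2]; exact hq0_ideal I hIh y hy
    exact hIne ((Ideal.eq_top_iff_one I).mpr h3)
  -- for every maximal left ideal m of B there is a maximal homogeneous ideal of C
  -- whose image under Φ lies in m
  have hJm : ∀ m : Ideal B, m.IsMaximal →
      ∃ J : Ideal C, (HomC J ∧ J ≠ ⊤ ∧ ∀ J' : Ideal C, HomC J' → J < J' → J' = ⊤) ∧
        ∀ x : C, x ∈ J → Φ x ∈ m := by
    intro m hm
    set T0 : Submodule K C := Submodule.span K {c : C | ∃ b ∈ m, c = ψ b} with hT0_def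
    have hT0_le : T0 ≤ 𝒞 (0 : Γ) := by
      rw [hT0_def, h𝒞]
      refine Submodule.span_mono ?_
      rintro c ⟨b, hb, rfl⟩
      exact ⟨1, h1mem, b, hψ_t b⟩
    have hT0_gen : ∀ b ∈ m, ψ b ∈ T0 := fun b hb =>
      Submodule.subset_span ⟨b, hb, rfl⟩
    have hΦT0 : ∀ x ∈ T0, Φ x ∈ m := by
      intro x hx
      rw [hT0_def] at hx
      induction hx using Submodule.span_induction with
      | mem c hc => obtain ⟨b, hb, rfl⟩ := hc; rw [hΦψ]; exact hb
      | zero => rw [map_zero]; exact m.zero_mem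
      | add u v hu hv ihu ihv => rw [map_add]; exact m.add_mem ihu ihv
      | smul k u hu ih =>
        rw [map_smul]; exact Submodule.smul_mem (m.restrictScalars K) k ih
    have hΦJ : ∀ x ∈ Cplus ⊔ T0, Φ x ∈ m := by
      intro x hx
      obtain ⟨y, hy, z, hz, rfl⟩ := Submodule.mem_sup.mp hx
      rw [map_add, hΦ_plus y hy, zero_add]
      exact hΦT0 z hz
    have hmulT0 : ∀ x z : C, z ∈ T0 → x * z ∈ Cplus ⊔ T0 := by
      intro x z hz
      rw [hT0_def] at hz
      induction hz using Submodule.span_induction with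
      | mem c hc =>
        obtain ⟨b, hb, rfl⟩ := hc
        refine Submodule.iSup_induction _ (motive := fun x => x * ψ b ∈ Cplus ⊔ T0) (hCtop x) ?_
          (by beta_reduce; rw [zero_mul]; exact Submodule.zero_mem _)
          (fun u v hu hv => by beta_reduce; rw [add_mul]; exact Submodule.add_mem _ hu hv)
        intro δ w hw
        by_cases hδ : δ = 0
        · subst hδ
          refine Submodule.mem_sup_right ?_
          rw [h𝒞] at hw
          induction hw using Submodule.span_induction with
          | mem d hd =>
            obtain ⟨a₁, ha₁, b₁, rfl⟩ := hd
            rw [hψ_t b, hemul 0 a₁ 1 h1mem b₁ b, mul_one, hρ0,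
              hψ_smul a₁ ha₁]
            exact Submodule.smul_mem _ _ (hT0_gen _ (m.mul_mem_left b₁ hb))
          | zero => rw [zero_mul]; exact Submodule.zero_mem _
          | add u v hu hv ihu ihv => rw [add_mul]; exact Submodule.add_mem _ ihu ihv
          | smul k u hu ih => rw [smul_mul_assoc]; exact Submodule.smul_mem _ _ ih
        · have h2 : w * ψ b ∈ 𝒞 (δ + 0) := hCmul δ 0 w hw (ψ b) (hψ_mem b)
          rw [add_zero] at h2
          exact Submodule.mem_sup_left (hCle_plus hδ h2)
      | zero => rw [mul_zero]; exact Submodule.zero_mem _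
      | add u v hu hv ihu ihv => rw [mul_add]; exact Submodule.add_mem _ ihu ihv
      | smul k u hu ih => rw [mul_smul_comm]; exact Submodule.smul_mem _ _ ih
    have hmulJ : ∀ x y : C, y ∈ Cplus ⊔ T0 → x * y ∈ Cplus ⊔ T0 := by
      intro x y hy
      obtain ⟨u, hu, v, hv, rfl⟩ := Submodule.mem_sup.mp hy
      rw [mul_add]
      exact Submodule.add_mem _ (Submodule.mem_sup_left (hCplus_mul x u hu)) (hmulT0 x v hv)
    refine ⟨idealOfSubmodule (Cplus ⊔ T0) hmulJ, ⟨?_, ?_, ?_⟩, ?_⟩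
    · -- homogeneous
      rw [hHomC]
      apply le_antisymm
      · intro x hx
        have hx' : x ∈ Cplus ⊔ T0 := hx
        obtain ⟨u, hu, v, hv, rfl⟩ := Submodule.mem_sup.mp hx'
        apply Submodule.add_mem
        · refine Submodule.iSup_induction _
            (motive := fun u => u ∈ ⨆ γ : Γ,
              ((idealOfSubmodule (Cplus ⊔ T0) hmulJ).restrictScalars K ⊓ 𝒞 γ)) hu ?_
            (Submodule.zero_mem _) (fun a b ha hb => Submodule.add_mem _ ha hb)
          rintro ⟨γ, hγ⟩ w hw
          refine Submodule.mem_iSup_of_mem γ ⟨?_, hw⟩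
          exact (Submodule.mem_sup_left (hCle_plus hγ hw) : w ∈ Cplus ⊔ T0)
        · exact Submodule.mem_iSup_of_mem 0
            ⟨(Submodule.mem_sup_right hv : v ∈ Cplus ⊔ T0), hT0_le hv⟩
      · exact iSup_le fun γ => inf_le_left
    · -- proper
      intro htop
      have h1 : (1 : C) ∈ Cplus ⊔ T0 :=
        (Ideal.eq_top_iff_one (idealOfSubmodule (Cplus ⊔ T0) hmulJ)).mp htop
      have h2 := hΦJ 1 h1
      rw [hΦ1] at h2
      exact hm.ne_top ((Ideal.eq_top_iff_one m).mpr h2)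
    · -- maximal among homogeneous ideals
      intro J' hJ'h hlt
      rcases Classical.em ((1 : B) ∈ Submodule.map Φ (J'.restrictScalars K ⊓ 𝒞 (0 : Γ))) with h1N | h1N
      · obtain ⟨x, hx, hΦx⟩ := h1N
        have hx1 : x = 1 := by rw [← hψΦ_C0 x hx.2, hΦx, hψ_t, he1]
        exact (Ideal.eq_top_iff_one J').mpr (hx1 ▸ hx.1)
      · exfalso
        apply not_le_of_gt hlt
        -- the image N of J' ∩ 𝒞0 under Φ is a proper left ideal containing m, so = m
        have hNmul : ∀ b' c : B,
            c ∈ Submodule.map Φ (J'.restrictScalars K ⊓ 𝒞 (0 : Γ)) →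
            b' * c ∈ Submodule.map Φ (J'.restrictScalars K ⊓ 𝒞 (0 : Γ)) := by
          rintro b' c ⟨x, ⟨hxJ, hx0⟩, rfl⟩
          have hx : x = ψ (Φ x) := (hψΦ_C0 x hx0).symm
          have hkey : ψ b' * x = ψ (b' * Φ x) := by
            conv_lhs => rw [hx]
            rw [hψmul]
          refine ⟨ψ b' * x, ⟨?_, ?_⟩, ?_⟩
          · exact J'.mul_mem_left (ψ b') hxJ
          · rw [hkey]; exact hψ_mem _
          · rw [hkey, hΦψ]
        have hmN : m ≤ idealOfSubmodule
            (Submodule.map Φ (J'.restrictScalars K ⊓ 𝒞 (0 : Γ))) hNmul := by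
          intro b hb
          refine ⟨ψ b, ⟨?_, hψ_mem b⟩, hΦψ b⟩
          exact le_of_lt hlt (Submodule.mem_sup_right (hT0_gen b hb))
        have hNIne : idealOfSubmodule
            (Submodule.map Φ (J'.restrictScalars K ⊓ 𝒞 (0 : Γ))) hNmul ≠ ⊤ :=
          fun h => h1N ((Ideal.eq_top_iff_one _).mp h)
        have hNIm := hm.eq_of_le hNIne hmN
        -- now J' ≤ Cplus ⊔ T0
        intro x hx
        have hx' : x ∈ ⨆ γ : Γ, (J'.restrictScalars K ⊓ 𝒞 γ) := by
          rw [← (hHomC J').mp hJ'h]; exact hx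
        show x ∈ Cplus ⊔ T0
        refine Submodule.iSup_induction _ (motive := fun x => x ∈ Cplus ⊔ T0) hx' ?_
          (Submodule.zero_mem _) (fun a b ha hb => Submodule.add_mem _ ha hb)
        intro γ w hw
        by_cases hγ : γ = 0
        · subst hγ
          have hΦw : Φ w ∈ m := by
            rw [hNIm]
            exact ⟨w, hw, rfl⟩
          have h2 : w = ψ (Φ w) := (hψΦ_C0 w hw.2).symm
          rw [h2]
          exact Submodule.mem_sup_right (hT0_gen _ hΦw)
        · exact Submodule.mem_sup_left (hCle_plus hγ hw.2)
    · intro x hx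
      exact hΦJ x hx
  -- assemble
  have hsets : {c : C | ∃ a ∈ sInf {m : Ideal A | m.IsHomogeneous 𝒜 ∧ m ≠ ⊤ ∧
        ∀ I : Ideal A, I.IsHomogeneous 𝒜 → m < I → I = ⊤}, ∃ b : B, c = e (a ⊗ₜ[K] b)}
      = {c : C | ∃ a ∈ Aplus, ∃ b : B, c = e (a ⊗ₜ[K] b)} := by
    ext c
    exact ⟨fun ⟨a, ha, b, h⟩ => ⟨a, (hradA a).mp ha, b, h⟩,
      fun ⟨a, ha, b, h⟩ => ⟨a, (hradA a).mpr ha, b, h⟩⟩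
  rw [hsets]
  have hspan_plus : Submodule.span K {c : C | ∃ a ∈ Aplus, ∃ b : B, c = e (a ⊗ₜ[K] b)}
      = Cplus := by
    apply le_antisymm
    · rw [Submodule.span_le]
      rintro c ⟨a, ha, b, rfl⟩
      exact hAplusC a ha b
    · refine iSup_le ?_
      rintro ⟨γ, hγ⟩
      rw [h𝒞, Submodule.span_le]
      rintro c ⟨a, ha, b, rfl⟩
      exact Submodule.subset_span ⟨a, hle_plus hγ ha, b, rfl⟩
  rw [hspan_plus]
  apply le_antisymm
  · -- rad C ≤ Cplus
    intro x hx
    have hΦx : Φ x = 0 := by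
      have hjac : Φ x ∈ (⊥ : Ideal B).jacobson := by
        show Φ x ∈ sInf {J : Ideal B | ⊥ ≤ J ∧ J.IsMaximal}
        refine Submodule.mem_sInf.mpr ?_
        rintro m ⟨-, hm⟩
        obtain ⟨J, hJS, hJΦ⟩ := hJm m hm
        exact hJΦ x (Submodule.mem_sInf.mp hx J hJS)
      rw [hB] at hjac
      exact (Submodule.mem_bot B).mp hjac
    have h2 : q0 x = 0 := by rw [hq0_eq, hΦx, map_zero]
    have h3 := hsubC x
    rwa [h2, sub_zero] at h3
  · -- Cplus ≤ rad C
    intro x hx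
    refine Submodule.mem_sInf.mpr ?_
    rintro I ⟨hIh, hIne, hImax⟩
    exact hmax_plus I hIh hIne hImax hx
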